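/- Let (aY, H) satisfy Axioms (h1)–(h5). For every event e = (z,u) ∈ aY, the reflection ρ_e : S¹ → S¹ with respect to e, defined by ρ_e(z)=z, ρ_e(u)=u, and (x, ρ_e(x)) = x_e for every x ∈ S¹∖e, is an involutive homeomorphism of S¹. -/

import Mathlib

open Set
open scoped ENNReal

noncomputable section

namespace Paper

/-- The pairs `(x,y)` and `(z,u)` of points of the circle separate each other:
`z` and `u` lie in different connected components of the complement of `{x,y}`. -/
def SeparatesPts (x y z u : Circle) : Prop :=
  z ∈ ({x, y}ᶜ : Set Circle) ∧ u ∈ ({x, y}ᶜ : Set Circle) ∧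
    u ∉ connectedComponentIn ({x, y}ᶜ : Set Circle) z

/-- An event: an unordered pair of distinct points of the circle. -/
abbrev Event : Type := {e : Sym2 Circle // ¬ e.IsDiag}

/-- The underlying two-point subset of the circle of an event. -/
def EventPts (e : Event) : Set Circle := {x | x ∈ e.1}

/-- Two events separate each other as pairs of points on the circle. -/
def EventSep (a b : Event) : Prop :=
  ∃ x y z u : Circle, a.1 = s(x, y) ∧ b.1 = s(z, u) ∧ SeparatesPts x y z u

/-- Two events are in the causal relation iff they do not separate each other. -/
def Causal (a b : Event) : Prop := ¬ EventSep a b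

/-- Two events lie on a common light line iff they share a point. -/
def OnLight (a b : Event) : Prop := ∃ x : Circle, x ∈ a.1 ∧ x ∈ b.1

/-- Strong causal relation: causal and not on a common light line. -/
def StrongCausal (a b : Event) : Prop := Causal a b ∧ ¬ OnLight a b

/-- `U` is one of the two open arcs determined by the event `e`. -/
def IsOpenArc (e : Event) (U : Set Circle) : Prop :=
  ∃ z, z ∉ EventPts e ∧ U = connectedComponentIn (EventPts e)ᶜ z

/-- `a ≤ b ≤ c`: the events `a` and `c` lie in the two (closed) arcs determined
by `b` on different sides of `b`. -/
def Between (a b c : Event) : Prop :=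
  ∃ U V : Set Circle, IsOpenArc b U ∧ IsOpenArc b V ∧ U ≠ V ∧
    EventPts a ⊆ closure U ∧ EventPts c ⊆ closure V

/-- `a < b < c`. -/
def SBtw (a b c : Event) : Prop := Between a b c ∧ a ≠ b ∧ c ≠ b

/-- The event `d` is strictly between the events `a` and `c`: `a` and `c` lie in
different open arcs determined by `d`. -/
def StrictlyBetween (d a c : Event) : Prop :=
  ∃ U V : Set Circle, IsOpenArc d U ∧ IsOpenArc d V ∧ U ≠ V ∧
    EventPts a ⊆ U ∧ EventPts c ⊆ V

/-- `ω` is an infinitely remote point of the semi-metric `d`. -/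
def IsRemote (d : Circle → Circle → ℝ≥0∞) (ω : Circle) : Prop :=
  ∀ x, x ≠ ω → d x ω = ⊤

/-- A semi-metric: symmetric, vanishing exactly on the diagonal, with at most one
infinitely remote point. -/
structure IsSemiMetric (d : Circle → Circle → ℝ≥0∞) : Prop where
  symm : ∀ x y, d x y = d y x
  eq_zero_iff : ∀ x y, d x y = 0 ↔ x = y
  top_remote : ∀ x y, d x y = ⊤ → ∃ ω, IsRemote d ω ∧ (x = ω ∨ y = ω)
  remote_unique : ∀ ω ω', IsRemote d ω → IsRemote d ω' → ω = ω'

/-- The semi-metric `d` has no infinitely remote point in the set `s`. -/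
def AvoidsRemote (d : Circle → Circle → ℝ≥0∞) (s : Set Circle) : Prop :=
  ∀ ω ∈ s, ¬ IsRemote d ω

/-- Real-valued distance. -/
def dR (d : Circle → Circle → ℝ≥0∞) (x y : Circle) : ℝ := (d x y).toReal

/-- A Möbius structure on the circle: a class of pairwise Möbius equivalent
semi-metrics (same cross-ratios on nondegenerate 4-tuples), containing for each
point a semi-metric with that point infinitely remote (metric inversion). -/
structure MoebiusStructure : Type where
  sems : Set (Circle → Circle → ℝ≥0∞)
  nonempty : sems.Nonempty
  isSemiMetric : ∀ d ∈ sems, IsSemiMetric d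
  exists_remote : ∀ ω : Circle, ∃ d ∈ sems, IsRemote d ω
  compatible : ∀ d ∈ sems, ∀ d' ∈ sems, ∀ x y z u : Circle,
    x ≠ y → x ≠ z → x ≠ u → y ≠ z → y ≠ u → z ≠ u →
    AvoidsRemote d {x, y, z, u} → AvoidsRemote d' {x, y, z, u} →
    dR d x z * dR d y u * (dR d' x u * dR d' y z)
      = dR d' x z * dR d' y u * (dR d x u * dR d y z)

/-- The open balls, centered at finite points, of the semi-metrics of `D`
having infinitely remote points. -/
def mBalls (D : Set (Circle → Circle → ℝ≥0∞)) : Set (Set Circle) :=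
  {B | ∃ d ∈ D, ∃ ω : Circle, IsRemote d ω ∧ ∃ x : Circle, x ≠ ω ∧
        ∃ r : ℝ≥0∞, 0 < r ∧ B = {y | d x y < r}}

/-- Axiom (T): the `M`-topology on the circle is the standard one. -/
def AxiomT (M : MoebiusStructure) : Prop :=
  TopologicalSpace.generateFrom (mBalls M.sems)
    = (inferInstance : TopologicalSpace Circle)

/-- Axiom (M): monotonicity. -/
def AxiomM (M : MoebiusStructure) : Prop :=
  ∀ x y z u : Circle, SeparatesPts x y z u →
    ∀ d ∈ M.sems, AvoidsRemote d {x, y, z, u} →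
      max (dR d x z * dR d y u) (dR d x u * dR d y z) < dR d x y * dR d z u

/-- A monotone Möbius structure on the circle. -/
def IsMonotone (M : MoebiusStructure) : Prop := AxiomT M ∧ AxiomM M

/-- The pair of events `a = (x,y)`, `b = (z,u)` is `M`-harmonic:
`|xz|·|yu| = |xu|·|yz|`. -/
def MHarmonic (M : MoebiusStructure) (a b : Event) : Prop :=
  ∃ x y z u : Circle, a.1 = s(x, y) ∧ b.1 = s(z, u) ∧
    ∀ d ∈ M.sems, AvoidsRemote d {x, y, z, u} →
      dR d x z * dR d y u = dR d x u * dR d y z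

/-- The timelike line dual to the event `e`, for the Möbius structure `M`. -/
def hline (M : MoebiusStructure) (e : Event) : Set Event := {a | MHarmonic M a e}

/-- Axiom (h1). -/
def AxH1 (H : Set (Set Event)) (line : Event → Set Event) : Prop :=
  (∀ e, line e ∈ H) ∧ ∀ h ∈ H, ∃ e, h = line e

/-- Axiom (h2): any event on `h_e` separates `e`. -/
def AxH2 (line : Event → Set Event) : Prop := ∀ e a, a ∈ line e → EventSep a e

/-- Axiom (h3): any two events on a timelike line are in the causal relation. -/
def AxH3 (line : Event → Set Event) : Prop :=
  ∀ e a b, a ∈ line e → b ∈ line e → Causal a b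

/-- Axiom (h4): for any `x ∉ e` there is a unique event `x_e ∈ h_e` containing `x`. -/
def AxH4 (line : Event → Set Event) : Prop :=
  ∀ e : Event, ∀ x : Circle, x ∉ EventPts e → ∃! a : Event, a ∈ line e ∧ x ∈ a.1

/-- Axiom (h5): duality. -/
def AxH5 (line : Event → Set Event) : Prop := ∀ e a, a ∈ line e → e ∈ line a

/-- Axiom (h6): two distinct events lie on at most one common timelike line. -/
def AxH6 (line : Event → Set Event) : Prop :=
  ∀ a b : Event, a ≠ b → ∀ e e',
    a ∈ line e → b ∈ line e → a ∈ line e' → b ∈ line e' → e = e'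

/-- The projection `x_e`: the unique event of the timelike line `h_e` containing `x`
(junk value if there is none). -/
noncomputable def proj (line : Event → Set Event) (e : Event) (x : Circle) : Event :=
  letI := Classical.propDecidable (∃ a, a ∈ line e ∧ x ∈ a.1)
  if h : ∃ a, a ∈ line e ∧ x ∈ a.1 then h.choose else e

/-- Axiom (t1). -/
def AxT1 (t : Event → Event → ℝ) : Prop := ∀ a b, Causal a b → 0 ≤ t a b

/-- Axiom (t2). -/
def AxT2 (t : Event → Event → ℝ) : Prop :=
  ∀ a b, Causal a b → (t a b = 0 ↔ OnLight a b)

/-- Axiom (t3). -/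
def AxT3 (t : Event → Event → ℝ) : Prop := ∀ a b, Causal a b → t a b = t b a

/-- Axiom (t4a): timelike lines are `t`-geodesics. -/
def AxT4a (line : Event → Set Event) (t : Event → Event → ℝ) : Prop :=
  ∀ a, ∀ e e' e'', e ∈ line a → e' ∈ line a → e'' ∈ line a →
    Between e e' e'' → t e e' + t e' e'' = t e e''

/-- Axiom (t4b): events at any prescribed time on both sides. -/
def AxT4b (line : Event → Set Event) (t : Event → Event → ℝ) : Prop :=
  ∀ a, ∀ e ∈ line a, ∀ s : ℝ, 0 < s →
    ∃ ep em, ep ∈ line a ∧ em ∈ line a ∧ SBtw em e ep ∧ t e ep = s ∧ t e em = s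

/-- Axiom (t5). -/
def AxT5 (line : Event → Set Event) (t : Event → Event → ℝ) : Prop :=
  ∀ e d : Event, ∀ x y z u : Circle,
    e.1 = s(x, y) → d.1 = s(z, u) → StrongCausal e d →
    t (proj line e z) (proj line e u) = t (proj line d x) (proj line d y)

/-- Axiom (t6): harmonicity. -/
def AxT6 (line : Event → Set Event) (t : Event → Event → ℝ) : Prop :=
  ∀ e d : Event, ∀ x y z u : Circle,
    e.1 = s(x, y) → d.1 = s(z, u) → d ∈ line e →
    ∀ a b : Event, a.1 = s(x, z) → b.1 = s(x, u) →
      t (proj line a y) (proj line a u) = t (proj line b y) (proj line b z)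

/-- The time determined by a Möbius structure: `0` on light lines, and the
cross-ratio formula for events in the strong causal relation via a
common perpendicular. -/
def TimeSpec (M : MoebiusStructure) (t : Event → Event → ℝ) : Prop :=
  (∀ a b, OnLight a b → t a b = 0) ∧
  (∀ a b e : Event, a ∈ hline M e → b ∈ hline M e → a ≠ b →
    ∀ x y z z' : Circle, e.1 = s(x, y) → z ∈ a.1 → z' ∈ b.1 →
      ∀ d ∈ M.sems, AvoidsRemote d {x, y, z, z'} →
        t a b = |Real.log (dR d x z' * dR d y z / (dR d x z * dR d y z'))|)

/-- The function `F_{ab}` of the hierarchy of time conditions, on events `d`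
strictly between `(o,ω)` and `(o',ω')`, for `a = (o,o')`, `b = (ω,ω')`. -/
noncomputable def Fab (line : Event → Set Event) (t : Event → Event → ℝ)
    (o ω o' ω' : Circle) (d : Event) : ℝ :=
  (t (proj line d o) (proj line d ω) + t (proj line d o') (proj line d ω')) / 2

end Paper

namespace Paper

/-- The defining property of the reflection `ρ_e` with respect to the event `e`. -/
def RefSpec (line : Event → Set Event) (e : Event) (ρ : Circle → Circle) : Prop :=
  (∀ p ∈ EventPts e, ρ p = p) ∧
    ∀ x, x ∉ EventPts e → ρ x ≠ x ∧ ∃ a ∈ line e, x ∈ a.1 ∧ ρ x ∈ a.1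

/-- The label of a fixed-point-free involution of `Fin 4`
(the partner of `0`, shifted down by one). -/
def label (σ : Equiv.Perm (Fin 4)) : Fin 3 :=
  if σ 0 = 1 then 0 else if σ 0 = 2 then 1 else 2

/-- The three fixed-point-free involutions of `Fin 4`, i.e. the three partitions of a
4-element set into pairs of opposite edges. -/
def inv3 : Fin 3 → Equiv.Perm (Fin 4) :=
  ![Equiv.swap 0 1 * Equiv.swap 2 3, Equiv.swap 0 2 * Equiv.swap 1 3,
    Equiv.swap 0 3 * Equiv.swap 1 2]

/-- The cross-ratio homomorphism `φ : S₄ → S₃`, acting on the labels of the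
partitions into pairs of opposite edges by conjugation. -/
def permAct (π : Equiv.Perm (Fin 4)) (j : Fin 3) : Fin 3 := label (π * inv3 j * π⁻¹)

/-- A sub-Möbius structure on the circle: a map `regP₄ → L₄` equivariant with respect
to the signed cross-ratio homomorphism. -/
def SubMoebius (M : (Fin 4 → Circle) → Fin 3 → ℝ) : Prop :=
  (∀ q : Fin 4 → Circle, Function.Injective q → M q 0 + M q 1 + M q 2 = 0) ∧
  ∀ q : Fin 4 → Circle, Function.Injective q → ∀ π : Equiv.Perm (Fin 4), ∀ j : Fin 3,
    M (q ∘ π) j = ((Equiv.Perm.sign π : ℤ) : ℝ) * M q (permAct π j)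

/-- The base values of the sub-Möbius structure associated with a timed causal space:
for a 4-tuple `q = (x,y,z,u)` whose cyclic order is `xyuz` (i.e. the pairs `(x,u)` and
`(y,z)` separate each other), `M(q) = (−t_{xy}, t_{yu}, t_{xy} − t_{yu})`, where
`t_{xy}` is the time between the projections of `u`, `z` to the timelike line dual to
the event `(x,y)`, and `t_{yu}` the time between the projections of `z`, `x` to the
timelike line dual to the event `(y,u)`. -/
def BaseSpec (line : Event → Set Event) (t : Event → Event → ℝ)
    (M : (Fin 4 → Circle) → Fin 3 → ℝ) : Prop :=
  ∀ q : Fin 4 → Circle, Function.Injective q →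
    SeparatesPts (q 0) (q 3) (q 1) (q 2) →
    ∀ exy eyu : Event, exy.1 = s(q 0, q 1) → eyu.1 = s(q 1, q 3) →
      M q 0 = -(t (proj line exy (q 3)) (proj line exy (q 2))) ∧
      M q 1 = t (proj line eyu (q 2)) (proj line eyu (q 0)) ∧
      M q 2 = t (proj line exy (q 3)) (proj line exy (q 2))
                - t (proj line eyu (q 2)) (proj line eyu (q 0))

/-- The three cross-ratios `(ln cr₁, ln cr₂, ln cr₃)` of a 4-tuple with respect to a
semi-metric. -/
noncomputable def crMap (dm : Circle → Circle → ℝ≥0∞) (q : Fin 4 → Circle) :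
    Fin 3 → ℝ :=
  ![Real.log (dR dm (q 0) (q 2) * dR dm (q 1) (q 3)
      / (dR dm (q 0) (q 3) * dR dm (q 1) (q 2))),
    Real.log (dR dm (q 0) (q 3) * dR dm (q 1) (q 2)
      / (dR dm (q 0) (q 1) * dR dm (q 2) (q 3))),
    Real.log (dR dm (q 0) (q 1) * dR dm (q 2) (q 3)
      / (dR dm (q 1) (q 3) * dR dm (q 0) (q 2)))]

/-- The semi-metrics whose cross-ratio map is the given map `M`. -/
def mapSems (M : (Fin 4 → Circle) → Fin 3 → ℝ) : Set (Circle → Circle → ℝ≥0∞) :=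
  {dm | IsSemiMetric dm ∧ ∀ q : Fin 4 → Circle, Function.Injective q →
    AvoidsRemote dm (Set.range q) → ∀ j, M q j = crMap dm q j}

/-- Harmonicity of a pair of events with respect to a map-form Möbius structure `M`:
`ln cr₃(u,x,y,z) = 0`. -/
def MapHarmonic (M : (Fin 4 → Circle) → Fin 3 → ℝ) (a b : Event) : Prop :=
  ∃ x y z u : Circle, a.1 = s(x, y) ∧ b.1 = s(z, u) ∧
    Function.Injective ![u, x, y, z] ∧ M ![u, x, y, z] 2 = 0

/-- The 4-tuple `(x₁,x₂,x₃,x₄)` is harmonic with respect to the Möbius structure `M`: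
`|x₁x₃|·|x₂x₄| = |x₁x₄|·|x₂x₃|`. -/
def Harm4 (M : MoebiusStructure) (x₁ x₂ x₃ x₄ : Circle) : Prop :=
  ∀ d ∈ M.sems, AvoidsRemote d {x₁, x₂, x₃, x₄} →
    dR d x₁ x₃ * dR d x₂ x₄ = dR d x₁ x₄ * dR d x₂ x₃

/-- The cross-ratio `cr₁`. -/
noncomputable def cr1R (d : Circle → Circle → ℝ≥0∞) (a b c e : Circle) : ℝ :=
  dR d a c * dR d b e / (dR d a e * dR d b c)

/-- A tuple of points of the circle is in cyclic order. -/
def InCyclicOrder {n : ℕ} (q : Fin n → Circle) : Prop :=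
  ∀ i j k l : Fin n, i < j → j < k → k < l → SeparatesPts (q i) (q k) (q j) (q l)

/-- Increment Axiom (I). -/
def AxiomI (M : MoebiusStructure) : Prop :=
  ∀ q : Fin 7 → Circle, Function.Injective q → InCyclicOrder q →
    Harm4 M (q 0) (q 2) (q 4) (q 5) → Harm4 M (q 1) (q 2) (q 3) (q 5) →
    ∀ d ∈ M.sems, AvoidsRemote d (Set.range q) →
      cr1R d (q 3) (q 4) (q 5) (q 6) < cr1R d (q 0) (q 1) (q 5) (q 6)

/-- The Lambert quadrilateral inequality (LQI). -/
def LQI (line : Event → Set Event) (t : Event → Event → ℝ) : Prop :=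
  ∀ a b : Event, ∀ o o' ω ω' : Circle,
    a.1 = s(o, o') → b.1 = s(ω, ω') → StrongCausal a b → SeparatesPts o ω' o' ω →
    ∀ eA eB : Event, eA.1 = s(o, ω) → eB.1 = s(o', ω') →
    ∀ d₀ : Event, a ∈ line d₀ → b ∈ line d₀ →
    ∀ d : Event, StrictlyBetween d eA eB → d ≠ d₀ → a ∈ line d →
      Fab line t o ω o' ω' d₀ < Fab line t o ω o' ω' d

/-- `g` is an `M`-automorphism: a bijection of the circle preserving the cross-ratios
of the Möbius structure `M`. -/
def MAut (M : MoebiusStructure) (g : Circle ≃ Circle) : Prop :=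
  ∀ d ∈ M.sems, ∀ d' ∈ M.sems, ∀ x y z u : Circle,
    x ≠ y → x ≠ z → x ≠ u → y ≠ z → y ≠ u → z ≠ u →
    AvoidsRemote d {x, y, z, u} → AvoidsRemote d' {g x, g y, g z, g u} →
    dR d' (g x) (g z) * dR d' (g y) (g u) * (dR d x u * dR d y z)
      = dR d x z * dR d y u * (dR d' (g x) (g u) * dR d' (g y) (g z))

theorem map_not_isDiag (g : Circle ≃ Circle) (z : Sym2 Circle) (h : ¬ z.IsDiag) :
    ¬ (z.map g).IsDiag := by
  induction z using Sym2.ind with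
  | _ x y =>
    rw [Sym2.map_pair_eq, Sym2.mk_isDiag_iff]
    rw [Sym2.mk_isDiag_iff] at h
    exact fun hg => h (g.injective hg)

/-- The map of events induced by a bijection of the circle. -/
def emap (g : Circle ≃ Circle) (e : Event) : Event :=
  ⟨e.1.map g, map_not_isDiag g e.1 e.2⟩

end Paper

namespace Paper

open Complex Real

/-- Chart coordinate on the circle based at `p`: the argument of `x/p * e^{iπ}`,
so that `p` itself gets coordinate `π` and the map is continuous away from `p`. -/
noncomputable def cAng (p x : Circle) : ℝ := Complex.arg ((x / p * Circle.exp Real.pi : Circle) : ℂ)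

/-- Inverse chart: `t ↦ e^{i(t+π)} p`. -/
noncomputable def cExp (p : Circle) (t : ℝ) : Circle := Circle.exp (t + Real.pi) * p

lemma cAng_mem (p x : Circle) : cAng p x ∈ Ioc (-π) π := Complex.arg_mem_Ioc _

lemma cAng_cExp (p : Circle) {t : ℝ} (h1 : -π < t) (h2 : t ≤ π) : cAng p (cExp p t) = t := by
  unfold cAng cExp
  rw [mul_div_cancel_right, ← Circle.exp_add]
  rw [show t + π + π = t + 2*π by ring, Circle.exp_add_two_pi]
  exact Circle.arg_exp h1 h2

lemma cExp_cAng (p x : Circle) : cExp p (cAng p x) = x := by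
  unfold cAng cExp
  rw [Circle.exp_add, Circle.exp_arg]
  have hE : Circle.exp π * Circle.exp π = 1 := by
    rw [← Circle.exp_add, show π + π = 2*π by ring, Circle.exp_two_pi]
  calc x / p * Circle.exp π * Circle.exp π * p
      = x / p * (Circle.exp π * Circle.exp π) * p := by group
    _ = x := by rw [hE, mul_one, div_mul_cancel]

lemma cAng_injective (p : Circle) : Function.Injective (cAng p) := by
  intro x y h
  rw [← cExp_cAng p x, ← cExp_cAng p y, h]

lemma cExp_periodic (p : Circle) (t : ℝ) : cExp p (t + 2*π) = cExp p t := by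
  unfold cExp
  rw [show t + 2*π + π = (t + π) + 2*π by ring, Circle.exp_add_two_pi]

lemma cExp_pi (p : Circle) : cExp p π = p := by
  unfold cExp
  rw [show π + π = 2*π by ring, Circle.exp_two_pi, one_mul]

lemma cExp_neg_pi (p : Circle) : cExp p (-π) = p := by
  unfold cExp
  rw [show -π + π = (0:ℝ) by ring, Circle.exp_zero, one_mul]

lemma cAng_self (p : Circle) : cAng p p = π := by
  have := cAng_cExp p (t := π) (by linarith [Real.pi_pos]) le_rfl
  rwa [cExp_pi] at this

lemma cAng_eq_pi_iff {p x : Circle} : cAng p x = π ↔ x = p := by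
  constructor
  · intro h
    have := cExp_cAng p x
    rw [h, cExp_pi] at this
    exact this.symm
  · intro h; rw [h]; exact cAng_self p

lemma cAng_lt_pi {p x : Circle} (h : x ≠ p) : cAng p x < π :=
  lt_of_le_of_ne (cAng_mem p x).2 (fun hc => h (cAng_eq_pi_iff.mp hc))

lemma neg_pi_lt_cAng (p x : Circle) : -π < cAng p x := (cAng_mem p x).1

lemma continuousAt_cAng {p x : Circle} (h : x ≠ p) : ContinuousAt (cAng p) x := by
  have hcont : Continuous fun y : Circle => ((y / p * Circle.exp Real.pi : Circle) : ℂ) := by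
    exact continuous_subtype_val.comp (((continuous_id.div' continuous_const)).mul continuous_const)
  apply (Complex.continuousAt_arg ?_).comp hcont.continuousAt
  rw [Complex.mem_slitPlane_iff_arg]
  exact ⟨fun hc => h (cAng_eq_pi_iff.mp hc), Circle.coe_ne_zero _⟩

lemma continuous_cExp (p : Circle) : Continuous (cExp p) :=
  ((Circle.exp.continuous.comp (continuous_id.add continuous_const))).mul continuous_const

/-- Membership in images of subsets of `(-π, π]` under `cExp`. -/
lemma mem_cExp_image {p : Circle} {s : Set ℝ} (hs : s ⊆ Ioc (-π) π) {w : Circle} :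
    w ∈ cExp p '' s ↔ cAng p w ∈ s := by
  constructor
  · rintro ⟨t, ht, rfl⟩
    rwa [cAng_cExp p (hs ht).1 (hs ht).2]
  · intro h
    exact ⟨cAng p w, h, cExp_cAng p w⟩

/-- Bands `{w | c < cAng p w < d}` with `d ≤ π` are open. -/
lemma isOpen_band (p : Circle) (c : ℝ) {d : ℝ} (hd : d ≤ π) :
    IsOpen {w : Circle | c < cAng p w ∧ cAng p w < d} := by
  rw [isOpen_iff_mem_nhds]
  intro w hw
  have hwp : w ≠ p := by
    intro hc; subst hc
    simp only [mem_setOf_eq, cAng_self] at hw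
    exact absurd (lt_of_lt_of_le hw.2 hd) (lt_irrefl _)
  have := (continuousAt_cAng hwp) (Ioo_mem_nhds hw.1 hw.2)
  exact Filter.mem_of_superset this (fun y hy => hy)


/-- The basic neighborhoods of the base point `p` are open. -/
lemma isOpen_nbase (p : Circle) {δ : ℝ} (hδ : 0 < δ) :
    IsOpen {w : Circle | π - δ < cAng p w ∨ cAng p w < -π + δ} := by
  have hset : {w : Circle | π - δ < cAng p w ∨ cAng p w < -π + δ}
      = (cExp p '' Icc (-π + δ) (π - δ))ᶜ := by
    ext w
    rw [mem_compl_iff, mem_cExp_image (fun t ht => ⟨by linarith [ht.1], by linarith [ht.2]⟩),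
      mem_Icc, mem_setOf_eq]
    constructor
    · rintro (h | h) ⟨h1, h2⟩ <;> linarith
    · intro h
      by_contra hc
      push_neg at hc
      exact h ⟨by linarith [hc.2], by linarith [hc.1]⟩
  rw [hset]
  exact ((isCompact_Icc.image (continuous_cExp p)).isClosed).isOpen_compl

/-- Every open set containing `p` contains a basic neighborhood of `p`. -/
lemma nbase_sub (p : Circle) {W : Set Circle} (hW : IsOpen W) (hp : p ∈ W) :
    ∃ δ > 0, {w : Circle | π - δ < cAng p w ∨ cAng p w < -π + δ} ⊆ W := by
  have h1 : cExp p ⁻¹' W ∈ nhds π := by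
    apply (continuous_cExp p).continuousAt.preimage_mem_nhds
    rw [cExp_pi]; exact hW.mem_nhds hp
  have h2 : cExp p ⁻¹' W ∈ nhds (-π) := by
    apply (continuous_cExp p).continuousAt.preimage_mem_nhds
    rw [cExp_neg_pi]; exact hW.mem_nhds hp
  obtain ⟨ε₁, hε₁, hb₁⟩ := Metric.mem_nhds_iff.mp h1
  obtain ⟨ε₂, hε₂, hb₂⟩ := Metric.mem_nhds_iff.mp h2
  refine ⟨min ε₁ ε₂, lt_min hε₁ hε₂, ?_⟩
  intro w hw
  rcases hw with h | h
  · have hm : cAng p w ∈ Metric.ball π ε₁ := by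
      rw [Real.ball_eq_Ioo]
      exact ⟨by linarith [min_le_left ε₁ ε₂], by linarith [(cAng_mem p w).2, hε₁]⟩
    have := hb₁ hm
    rwa [mem_preimage, cExp_cAng] at this
  · have hm : cAng p w ∈ Metric.ball (-π) ε₂ := by
      rw [Real.ball_eq_Ioo]
      exact ⟨by linarith [(cAng_mem p w).1, hε₂], by linarith [min_le_right ε₁ ε₂]⟩
    have := hb₂ hm
    rwa [mem_preimage, cExp_cAng] at this

/-- Every open set containing a point `v ≠ p` contains a band around `v`. -/
lemma band_sub (p : Circle) {W : Set Circle} (hW : IsOpen W) {v : Circle} (hv : v ∈ W)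
    (hvp : v ≠ p) :
    ∃ ε > 0, cAng p v + ε ≤ π ∧
      {w : Circle | cAng p v - ε < cAng p w ∧ cAng p w < cAng p v + ε} ⊆ W := by
  have hc : cAng p v < π := lt_of_le_of_ne (cAng_mem p v).2 (by
    intro h
    exact hvp (by rw [← cExp_cAng p v, h, cExp_pi]))
  have h1 : cExp p ⁻¹' W ∈ nhds (cAng p v) := by
    apply (continuous_cExp p).continuousAt.preimage_mem_nhds
    rw [cExp_cAng]; exact hW.mem_nhds hv
  obtain ⟨ε₁, hε₁, hb₁⟩ := Metric.mem_nhds_iff.mp h1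
  refine ⟨min ε₁ (π - cAng p v), lt_min hε₁ (by linarith), by
    have := min_le_right ε₁ (π - cAng p v); linarith, ?_⟩
  intro w hw
  have hm : cAng p w ∈ Metric.ball (cAng p v) ε₁ := by
    rw [Real.ball_eq_Ioo]
    exact ⟨by linarith [min_le_left ε₁ (π - cAng p v), hw.1],
      by linarith [min_le_left ε₁ (π - cAng p v), hw.2]⟩
  have := hb₁ hm
  rwa [mem_preimage, cExp_cAng] at this


lemma connectedComponentIn_split {X : Type*} [TopologicalSpace X] {A B : Set X}
    (hAo : IsOpen A) (hA : IsPreconnected A) (hB : IsPreconnected B)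
    (hd : B ∩ closure A = ∅) :
    (∀ x ∈ A, connectedComponentIn (A ∪ B) x = A) ∧
    (∀ x ∈ B, connectedComponentIn (A ∪ B) x = B) := by
  have hAB : ∀ x, x ∈ A → x ∈ B → False := by
    intro x hxA hxB
    have : x ∈ B ∩ closure A := ⟨hxB, subset_closure hxA⟩
    rw [hd] at this; exact this
  have key : ∀ C : Set X, IsPreconnected C → C ⊆ A ∪ B → C ⊆ A ∨ C ⊆ B := by
    intro C hC hCs
    by_cases hCA : (C ∩ A).Nonempty
    · left
      by_contra hnB
      obtain ⟨b, hbC, hbB⟩ : ∃ b ∈ C, b ∉ A := by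
        rcases not_subset.mp hnB with ⟨b, hb1, hb2⟩; exact ⟨b, hb1, hb2⟩
      have hbB' : b ∈ B := (hCs hbC).resolve_left hbB
      have hcov : C ⊆ A ∪ (closure A)ᶜ := by
        intro c hc
        rcases hCs hc with h | h
        · exact Or.inl h
        · right
          intro hcl
          have : c ∈ B ∩ closure A := ⟨h, hcl⟩
          rw [hd] at this; exact this
      have hne := hC A (closure A)ᶜ hAo isClosed_closure.isOpen_compl hcov
        hCA ⟨b, hbC, fun hcl => by
          have : b ∈ B ∩ closure A := ⟨hbB', hcl⟩
          rw [hd] at this; exact this⟩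
      obtain ⟨c, _, hcA, hcnl⟩ := hne
      exact hcnl (subset_closure hcA)
    · right
      intro c hc
      rcases hCs hc with h | h
      · exact absurd ⟨c, hc, h⟩ hCA
      · exact h
  constructor
  · intro x hx
    apply Set.Subset.antisymm
    · rcases key _ isPreconnected_connectedComponentIn (connectedComponentIn_subset _ _) with h | h
      · exact h
      · exact absurd (h (mem_connectedComponentIn (Or.inl hx))) (fun hxB => hAB x hx hxB)
    · exact hA.subset_connectedComponentIn hx subset_union_left
  · intro x hx
    apply Set.Subset.antisymm
    · rcases key _ isPreconnected_connectedComponentIn (connectedComponentIn_subset _ _) with h | h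
      · exact absurd (h (mem_connectedComponentIn (Or.inr hx))) (fun hxA => hAB x hxA hx)
      · exact h
    · exact hB.subset_connectedComponentIn hx subset_union_right

/-- `w` lies strictly between `x` and `y` in the chart based at `p`. -/
def Btw (p x y w : Circle) : Prop :=
  min (cAng p x) (cAng p y) < cAng p w ∧ cAng p w < max (cAng p x) (cAng p y)

lemma sep_iff_btw {p x y : Circle} (hx : x ≠ p) (hy : y ≠ p) (hxy : x ≠ y)
    {r s : Circle} (hr : r ∉ ({x, y} : Set Circle)) (hs : s ∉ ({x, y} : Set Circle)) :
    SeparatesPts x y r s ↔ (Btw p x y r ↔ ¬ Btw p x y s) := by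
  have hab : cAng p x ≠ cAng p y := fun h => hxy (cAng_injective p h)
  set α := min (cAng p x) (cAng p y) with hα
  set β := max (cAng p x) (cAng p y) with hβ
  have hαβ : α < β := by
    rcases lt_or_gt_of_ne hab with h | h
    · rw [hα, hβ, min_eq_left h.le, max_eq_right h.le]; exact h
    · rw [hα, hβ, min_eq_right h.le, max_eq_left h.le]; exact h
  have hαmem : -π < α := lt_min (neg_pi_lt_cAng p x) (neg_pi_lt_cAng p y)
  have hβmem : β < π := max_lt (cAng_lt_pi hx) (cAng_lt_pi hy)
  set A : Set Circle := {w | α < cAng p w ∧ cAng p w < β} with hA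
  set B : Set Circle := {w | cAng p w < α ∨ β < cAng p w} with hB
  have hBtwA : ∀ w, Btw p x y w ↔ w ∈ A := by
    intro w
    rw [Btw, ← hα, ← hβ]; exact Iff.rfl
  have hmemchar : ∀ w : Circle, w ∉ ({x, y} : Set Circle) ↔ (w ∈ A ∨ w ∈ B) := by
    intro w
    constructor
    · intro hw
      have hwa : cAng p w ≠ cAng p x := fun h => hw (by simp [cAng_injective p h])
      have hwb : cAng p w ≠ cAng p y := fun h => hw (by simp [cAng_injective p h])
      have hwα : cAng p w ≠ α := by
        rcases min_choice (cAng p x) (cAng p y) with h | h <;> rw [hα, h] <;> assumption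
      have hwβ : cAng p w ≠ β := by
        rcases max_choice (cAng p x) (cAng p y) with h | h <;> rw [hβ, h] <;> assumption
      rcases lt_trichotomy (cAng p w) α with h | h | h
      · exact Or.inr (Or.inl h)
      · exact absurd h hwα
      rcases lt_trichotomy (cAng p w) β with h' | h' | h'
      · exact Or.inl ⟨h, h'⟩
      · exact absurd h' hwβ
      · exact Or.inr (Or.inr h')
    · intro hw hwxy
      have hc : cAng p w = cAng p x ∨ cAng p w = cAng p y := by
        rcases hwxy with h | h
        · left; rw [h]
        · right; rw [show w = y from h]
      have h1 : α ≤ cAng p w := by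
        rcases hc with h | h <;> rw [h]
        · exact min_le_left _ _
        · exact min_le_right _ _
      have h2 : cAng p w ≤ β := by
        rcases hc with h | h <;> rw [h]
        · exact le_max_left _ _
        · exact le_max_right _ _
      have h3 : cAng p w = α ∨ cAng p w = β := by
        rcases hc with h | h
        · rcases le_total (cAng p x) (cAng p y) with h' | h'
          · left; rw [h, hα, min_eq_left h']
          · right; rw [h, hβ, max_eq_left h']
        · rcases le_total (cAng p x) (cAng p y) with h' | h'
          · right; rw [h, hβ, max_eq_right h']
          · left; rw [h, hα, min_eq_right h']
      rcases hw with ⟨g1, g2⟩ | (g1 | g1) <;> rcases h3 with h | h <;> linarith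
  have hAopen : IsOpen A := isOpen_band p α hβmem.le
  have hAeq : A = cExp p '' Ioo α β := by
    ext w
    rw [mem_cExp_image (fun t ht => ⟨lt_trans hαmem ht.1, le_of_lt (lt_trans ht.2 hβmem)⟩)]
    exact Iff.rfl
  have hApre : IsPreconnected A := by
    rw [hAeq]; exact isPreconnected_Ioo.image _ (continuous_cExp p).continuousOn
  have hBeq : B = cExp p '' Ioo (β - 2*π) α := by
    ext w
    constructor
    · intro hw
      rcases hw with h | h
      · exact ⟨cAng p w, ⟨by linarith [neg_pi_lt_cAng p w, Real.pi_pos], h⟩, cExp_cAng p w⟩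
      · refine ⟨cAng p w - 2*π, ⟨by linarith, by linarith [(cAng_mem p w).2, Real.pi_pos]⟩, ?_⟩
        have := cExp_periodic p (cAng p w - 2*π)
        rw [show cAng p w - 2*π + 2*π = cAng p w by ring] at this
        rw [← this]; exact cExp_cAng p w
    · rintro ⟨t, ⟨ht1, ht2⟩, rfl⟩
      by_cases h : -π < t
      · left
        rw [cAng_cExp p h (by linarith)]
        exact ht2
      · right
        push_neg at h
        have h2π : cExp p t = cExp p (t + 2*π) := (cExp_periodic p t).symm
        rw [h2π, cAng_cExp p (by linarith [Real.pi_pos]) (by linarith)]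
        linarith
  have hBpre : IsPreconnected B := by
    rw [hBeq]; exact isPreconnected_Ioo.image _ (continuous_cExp p).continuousOn
  have hd : B ∩ closure A = ∅ := by
    rw [eq_empty_iff_forall_notMem]
    rintro w ⟨hwB, hwcl⟩
    have hsub : closure A ⊆ cExp p '' Icc α β := by
      apply closure_minimal
      · rw [hAeq]; exact image_mono Ioo_subset_Icc_self
      · exact ((isCompact_Icc.image (continuous_cExp p))).isClosed
    have := (mem_cExp_image (p := p)
      (fun t ht => ⟨lt_of_lt_of_le hαmem ht.1, le_trans ht.2 hβmem.le⟩)).mp (hsub hwcl)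
    rcases hwB with h | h
    · exact absurd this.1 (not_le.mpr h)
    · exact absurd this.2 (not_le.mpr h)
  have hsplit := connectedComponentIn_split hAopen hApre hBpre hd
  have hS : ({x, y}ᶜ : Set Circle) = A ∪ B := by
    ext w
    rw [mem_compl_iff, hmemchar w, mem_union]
  have hr' := (hmemchar r).mp hr
  have hs' := (hmemchar s).mp hs
  constructor
  · rintro ⟨_, _, hsep⟩ 
    rw [hS] at hsep
    rcases hr' with h | h
    · rw [hsplit.1 r h] at hsep
      rw [hBtwA r, hBtwA s]
      exact ⟨fun _ => hsep, fun _ => h⟩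
    · rw [hsplit.2 r h] at hsep
      rw [hBtwA r, hBtwA s]
      have hrnA : r ∉ A := fun hrA => by
        have : r ∈ B ∩ closure A := ⟨h, subset_closure hrA⟩
        rw [hd] at this; exact this
      have hsA : s ∈ A := by
        rcases hs' with h' | h'
        · exact h'
        · exact absurd h' hsep
      exact ⟨fun hrA => absurd hrA hrnA, fun hns => absurd hsA hns⟩
  · intro hiff
    refine ⟨hr, hs, ?_⟩
    rw [hS]
    rw [hBtwA r, hBtwA s] at hiff
    rcases hr' with h | h
    · rw [hsplit.1 r h]
      exact hiff.mp h
    · rw [hsplit.2 r h]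
      intro hsB
      have hsnA : s ∉ A := fun hsA => by
        have : s ∈ B ∩ closure A := ⟨hsB, subset_closure hsA⟩
        rw [hd] at this; exact this
      have hrA : r ∈ A := hiff.mpr hsnA
      have : r ∈ B ∩ closure A := ⟨h, subset_closure hrA⟩
      rw [hd] at this; exact this
  

lemma anti_interior {l m α β : ℝ} {F : ℝ → ℝ}
    (hanti : ∀ s s', l < s → s < m → l < s' → s' < m → s < s' → F s' < F s)
    (hsurj : ∀ y, α < y → y < β → ∃ s, (l < s ∧ s < m) ∧ F s = y)
    {s₀ : ℝ} (hs₀ : l < s₀) (hs₀' : s₀ < m) (hF₀ : α < F s₀ ∧ F s₀ < β)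
    {ε : ℝ} (hε : 0 < ε) :
    ∃ η > 0, ∀ s, l < s → s < m → |s - s₀| < η → |F s - F s₀| < ε := by
  set y₁ := (F s₀ + min β (F s₀ + ε)) / 2 with hy₁
  have hy₁l : F s₀ < y₁ := by
    have : F s₀ < min β (F s₀ + ε) := lt_min hF₀.2 (by linarith)
    rw [hy₁]; linarith
  have hy₁u : y₁ < β := by
    have h1 : min β (F s₀ + ε) ≤ β := min_le_left _ _
    rw [hy₁]; cases' lt_or_ge (F s₀ + ε) β with h h
    · rw [min_eq_right h.le]; linarith
    · rw [min_eq_left h]; linarith [hF₀.2]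
  have hy₁ε : y₁ < F s₀ + ε := by
    have h1 : min β (F s₀ + ε) ≤ F s₀ + ε := min_le_right _ _
    rw [hy₁]; linarith
  obtain ⟨s₁, ⟨hs₁l, hs₁m⟩, hFs₁⟩ := hsurj y₁ (lt_trans hF₀.1 hy₁l) hy₁u
  have hs₁ : s₁ < s₀ := by
    rcases lt_trichotomy s₁ s₀ with h | h | h
    · exact h
    · exfalso; rw [h] at hFs₁; rw [← hFs₁] at hy₁l; exact lt_irrefl _ hy₁l
    · exfalso
      have := hanti s₀ s₁ hs₀ hs₀' hs₁l hs₁m h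
      rw [hFs₁] at this; linarith
  set y₂ := (max α (F s₀ - ε) + F s₀) / 2 with hy₂
  have hy₂u : y₂ < F s₀ := by
    have : max α (F s₀ - ε) < F s₀ := max_lt hF₀.1 (by linarith)
    rw [hy₂]; linarith
  have hy₂l : α < y₂ := by
    have h1 : α ≤ max α (F s₀ - ε) := le_max_left _ _
    rw [hy₂]; linarith [hF₀.1]
  have hy₂ε : F s₀ - ε < y₂ := by
    have h1 : F s₀ - ε ≤ max α (F s₀ - ε) := le_max_right _ _
    rw [hy₂]; linarith
  obtain ⟨s₂, ⟨hs₂l, hs₂m⟩, hFs₂⟩ := hsurj y₂ hy₂l (lt_trans hy₂u hF₀.2)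
  have hs₂ : s₀ < s₂ := by
    rcases lt_trichotomy s₀ s₂ with h | h | h
    · exact h
    · exfalso; rw [← h] at hFs₂; rw [← hFs₂] at hy₂u; exact lt_irrefl _ hy₂u
    · exfalso
      have := hanti s₂ s₀ hs₂l hs₂m hs₀ hs₀' h
      rw [hFs₂] at this; linarith
  refine ⟨min (s₀ - s₁) (s₂ - s₀), lt_min (by linarith) (by linarith), ?_⟩
  intro s hsl hsm habs
  have h1 : s₁ < s := by
    have := abs_lt.mp habs
    have := min_le_left (s₀ - s₁) (s₂ - s₀)
    linarith [this, (abs_lt.mp habs).1]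
  have h2 : s < s₂ := by
    have := min_le_right (s₀ - s₁) (s₂ - s₀)
    linarith [this, (abs_lt.mp habs).2]
  have hu : F s < y₁ := by
    have := hanti s₁ s hs₁l hs₁m hsl hsm h1
    rw [hFs₁] at this; linarith
  have hd : y₂ < F s := by
    have := hanti s s₂ hsl hsm hs₂l hs₂m h2
    rw [hFs₂] at this; linarith
  rw [abs_lt]; constructor <;> linarith

lemma anti_top {l m α β : ℝ} {F : ℝ → ℝ} (hαβ : α < β)
    (hanti : ∀ s s', l < s → s < m → l < s' → s' < m → s < s' → F s' < F s)
    (hsurj : ∀ y, α < y → y < β → ∃ s, (l < s ∧ s < m) ∧ F s = y)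
    {ε : ℝ} (hε : 0 < ε) :
    ∃ η > 0, ∀ s, l < s → s < m → m - η < s → F s < α + ε := by
  set y := min (α + ε) ((α + β)/2) with hy
  have hyl : α < y := lt_min (by linarith) (by linarith)
  have hyu : y < β := lt_of_le_of_lt (min_le_right _ _) (by linarith)
  obtain ⟨s', ⟨hs'l, hs'm⟩, hFs'⟩ := hsurj y hyl hyu
  refine ⟨m - s', by linarith, ?_⟩
  intro s hsl hsm hs
  have h1 : s' < s := by linarith
  have := hanti s' s hs'l hs'm hsl hsm h1
  rw [hFs'] at this
  calc F s < y := this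
    _ ≤ α + ε := min_le_left _ _

lemma anti_bot {l m α β : ℝ} {F : ℝ → ℝ} (hαβ : α < β)
    (hanti : ∀ s s', l < s → s < m → l < s' → s' < m → s < s' → F s' < F s)
    (hsurj : ∀ y, α < y → y < β → ∃ s, (l < s ∧ s < m) ∧ F s = y)
    {ε : ℝ} (hε : 0 < ε) :
    ∃ η > 0, ∀ s, l < s → s < m → s < l + η → β - ε < F s := by
  set y := max (β - ε) ((α + β)/2) with hy
  have hyl : α < y := lt_of_lt_of_le (by linarith) (le_max_right _ _)
  have hyu : y < β := max_lt (by linarith) (by linarith)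
  obtain ⟨s', ⟨hs'l, hs'm⟩, hFs'⟩ := hsurj y hyl hyu
  refine ⟨s' - l, by linarith, ?_⟩
  intro s hsl hsm hs
  have h1 : s < s' := by linarith
  have := hanti s s' hsl hsm hs'l hs'm h1
  rw [hFs'] at this
  calc β - ε ≤ y := le_max_left _ _
    _ < F s := this


end Paper


namespace Paper

open Complex Real

lemma notmem_pair {w x y : Circle} (h : w ∈ ({x, y}ᶜ : Set Circle)) : w ≠ x ∧ w ≠ y := by
  simp only [Set.mem_compl_iff, Set.mem_insert_iff, Set.mem_singleton_iff] at h
  push_neg at h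
  exact h

lemma sep_swap_left {x y z u : Circle} (h : SeparatesPts x y z u) : SeparatesPts y x z u := by
  unfold SeparatesPts at *
  rwa [Set.pair_comm y x]

lemma sep_swap_right {x y z u : Circle} (h : SeparatesPts x y z u) : SeparatesPts x y u z := by
  obtain ⟨hz, hu, hsep⟩ := h
  refine ⟨hu, hz, fun hc => ?_⟩
  have h2 := connectedComponentIn_eq hc
  exact hsep (h2 ▸ mem_connectedComponentIn hu)

lemma eventSep_elim {a b : Event} {x y z u : Circle} (hab : EventSep a b)
    (ha : a.1 = s(x, y)) (hb : b.1 = s(z, u)) : SeparatesPts x y z u := by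
  obtain ⟨x', y', z', u', ha', hb', hsep⟩ := hab
  rw [ha] at ha'
  rw [hb] at hb'
  rw [Sym2.eq_iff] at ha' hb'
  rcases ha' with ⟨rfl, rfl⟩ | ⟨rfl, rfl⟩ <;> rcases hb' with ⟨rfl, rfl⟩ | ⟨rfl, rfl⟩
  · exact hsep
  · exact sep_swap_right hsep
  · exact sep_swap_left hsep
  · exact sep_swap_right (sep_swap_left hsep)

lemma eventPts_eq {e : Event} {z u : Circle} (he : e.1 = s(z, u)) :
    EventPts e = {z, u} := by
  ext w
  simp [EventPts, he, Sym2.mem_iff]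

section Main

variable {line : Event → Set Event} {e : Event} {z₀ u₀ : Circle} {ρ : Circle → Circle}

lemma refl_line (h2 : AxH2 line) (he : e.1 = s(z₀, u₀))
    (hρ : RefSpec line e ρ) {x : Circle} (hx : x ∉ EventPts e) :
    ∃ a ∈ line e, a.1 = s(x, ρ x) ∧ SeparatesPts x (ρ x) z₀ u₀ := by
  obtain ⟨hne, a, haline, hxa, hρxa⟩ := hρ.2 x hx
  have ha1 : a.1 = s(x, ρ x) := ((Sym2.mem_and_mem_iff (Ne.symm hne)).mp ⟨hxa, hρxa⟩)
  exact ⟨a, haline, ha1, eventSep_elim (h2 e a haline) ha1 he⟩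

lemma refspec_involutive (h2 : AxH2 line) (h4 : AxH4 line) (he : e.1 = s(z₀, u₀))
    (hρ : RefSpec line e ρ) : Function.Involutive ρ := by
  intro x
  by_cases hx : x ∈ EventPts e
  · rw [hρ.1 x hx, hρ.1 x hx]
  · obtain ⟨a, haline, ha1, hsep⟩ := refl_line h2 he hρ hx
    have hρx : ρ x ∉ EventPts e := by
      rw [eventPts_eq he]
      have h1 := (notmem_pair hsep.1).2
      have h2' := (notmem_pair hsep.2.1).2
      rintro (h | h)
      · exact h1 h.symm
      · exact h2' h.symm
    obtain ⟨b, hbline, hb1, _⟩ := refl_line h2 he hρ (x := ρ x) hρx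
    have hba : b = a := by
      refine (h4 e (ρ x) hρx).unique ⟨hbline, ?_⟩ ⟨haline, ?_⟩
      · rw [hb1]; exact Sym2.mem_mk_left _ _
      · rw [ha1]; exact Sym2.mem_mk_right _ _
    have hmem : ρ (ρ x) ∈ a.1 := by
      rw [← hba, hb1]; exact Sym2.mem_mk_right _ _
    rw [ha1, Sym2.mem_iff] at hmem
    rcases hmem with h | h
    · exact h
    · exact absurd h ((hρ.2 (ρ x) hρx).1)

lemma refl_btw (h2 : AxH2 line) (he : e.1 = s(z₀, u₀)) (hρ : RefSpec line e ρ)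
    {x : Circle} (hx : x ∉ EventPts e) :
    (min (cAng u₀ x) (cAng u₀ (ρ x)) < cAng u₀ z₀ ∧
      cAng u₀ z₀ < max (cAng u₀ x) (cAng u₀ (ρ x))) ∧
      ρ x ≠ u₀ ∧ ρ x ≠ z₀ ∧ x ≠ ρ x ∧ x ≠ u₀ := by
  obtain ⟨a, haline, ha1, hsep⟩ := refl_line h2 he hρ hx
  have hzx := notmem_pair hsep.1
  have hux := notmem_pair hsep.2.1
  have hxu : x ≠ u₀ := fun h => hux.1 h.symm
  have hρxu : ρ x ≠ u₀ := fun h => hux.2 h.symm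
  have hρxz : ρ x ≠ z₀ := fun h => hzx.2 h.symm
  have hxρ : x ≠ ρ x := Ne.symm (hρ.2 x hx).1
  have hiff := (sep_iff_btw (p := u₀) hxu hρxu hxρ hsep.1 hsep.2.1).mp hsep
  have hBu : ¬ Btw u₀ x (ρ x) u₀ := by
    intro hB
    have := hB.2
    rw [cAng_self] at this
    exact absurd this (not_lt.mpr (le_of_lt (max_lt (cAng_lt_pi hxu) (cAng_lt_pi hρxu))))
  have hBz : Btw u₀ x (ρ x) z₀ := hiff.mpr hBu
  exact ⟨hBz, hρxu, hρxz, hxρ, hxu⟩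

lemma refl_noncross (h2 : AxH2 line) (h3 : AxH3 line) (he : e.1 = s(z₀, u₀))
    (hρ : RefSpec line e ρ) (hinv : Function.Involutive ρ)
    {x x' : Circle} (hx : x ∉ EventPts e) (hx' : x' ∉ EventPts e)
    (hne : x' ≠ x) (hne2 : x' ≠ ρ x) :
    (Btw u₀ x (ρ x) x' ↔ Btw u₀ x (ρ x) (ρ x')) := by
  obtain ⟨a, haline, ha1, hsep⟩ := refl_line h2 he hρ hx
  obtain ⟨a', ha'line, ha'1, hsep'⟩ := refl_line h2 he hρ hx'
  have hcaus : ¬ EventSep a a' := h3 e a a' haline ha'line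
  have hnosep : ¬ SeparatesPts x (ρ x) x' (ρ x') := fun hs =>
    hcaus ⟨x, ρ x, x', ρ x', ha1, ha'1, hs⟩
  have hux := notmem_pair hsep.2.1
  have hxu : x ≠ u₀ := fun h => hux.1 h.symm
  have hρxu : ρ x ≠ u₀ := fun h => hux.2 h.symm
  have hxρ : x ≠ ρ x := Ne.symm (hρ.2 x hx).1
  have hr : x' ∉ ({x, ρ x} : Set Circle) := by
    simp only [Set.mem_insert_iff, Set.mem_singleton_iff]
    push_neg
    exact ⟨hne, hne2⟩
  have hs : ρ x' ∉ ({x, ρ x} : Set Circle) := by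
    simp only [Set.mem_insert_iff, Set.mem_singleton_iff]
    push_neg
    constructor
    · intro h
      exact hne2 ((hinv x').symm.trans (congrArg ρ h))
    · intro h
      exact hne (hinv.injective h)
  have hiff := (sep_iff_btw (p := u₀) hxu hρxu hxρ hr hs)
  rw [hiff] at hnosep
  by_cases hb1 : Btw u₀ x (ρ x) x' <;> by_cases hb2 : Btw u₀ x (ρ x) (ρ x')
  · exact iff_of_true hb1 hb2
  · exact absurd ⟨fun _ => hb2, fun _ => hb1⟩ hnosep
  · exact absurd ⟨fun h => (hb1 h).elim, fun hn => (hn hb2).elim⟩ hnosep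
  · exact iff_of_false hb1 hb2

lemma refspec_continuous (h2 : AxH2 line) (h3 : AxH3 line) (h4 : AxH4 line)
    (he : e.1 = s(z₀, u₀)) (hzu : z₀ ≠ u₀) (hρ : RefSpec line e ρ) : Continuous ρ := by
  have hinv := refspec_involutive h2 h4 he hρ
  have hPts : EventPts e = {z₀, u₀} := eventPts_eq he
  set θ := cAng u₀ z₀ with hθdef
  have hθπ : θ < π := cAng_lt_pi hzu
  have hθπ' : -π < θ := neg_pi_lt_cAng u₀ z₀
  have hu₀mem : u₀ ∈ EventPts e := by rw [hPts]; exact Set.mem_insert_of_mem _ rfl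
  have hz₀mem : z₀ ∈ EventPts e := by rw [hPts]; exact Set.mem_insert _ _
  have hρu₀ : ρ u₀ = u₀ := hρ.1 u₀ hu₀mem
  have hρz₀ : ρ z₀ = z₀ := hρ.1 z₀ hz₀mem
  have hmem : ∀ t : ℝ, -π < t → t < π → t ≠ θ → cExp u₀ t ∉ EventPts e := by
    intro t ht1 ht2 ht3
    rw [hPts]
    simp only [Set.mem_insert_iff, Set.mem_singleton_iff]
    push_neg
    constructor
    · intro h
      exact ht3 (by rw [← cAng_cExp u₀ ht1 ht2.le, h])
    · intro h
      have h5 := cAng_cExp u₀ ht1 ht2.le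
      rw [h, cAng_self] at h5
      linarith
  let F : ℝ → ℝ := fun s => cAng u₀ (ρ (cExp u₀ s))
  have hgρ : ∀ w : Circle, cAng u₀ (ρ w) = F (cAng u₀ w) := by
    intro w
    show cAng u₀ (ρ w) = cAng u₀ (ρ (cExp u₀ (cAng u₀ w)))
    rw [cExp_cAng]
  have hcgA : ∀ s : ℝ, -π < s → s ≤ π → cAng u₀ (cExp u₀ s) = s := fun s a b => cAng_cExp u₀ a b
  have hFs_eq : ∀ s : ℝ, F s = cAng u₀ (ρ (cExp u₀ s)) := fun s => rfl
  have hbasic : ∀ x : Circle, x ∉ EventPts e →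
      cAng u₀ (ρ x) < π ∧ cAng u₀ (ρ x) ≠ θ ∧
      (cAng u₀ x < θ → θ < cAng u₀ (ρ x)) ∧ (θ < cAng u₀ x → cAng u₀ (ρ x) < θ) := by
    intro x hx
    obtain ⟨hbtw, hρu, hρz, hxρ, hxu⟩ := refl_btw h2 he hρ hx
    have hρθ : cAng u₀ (ρ x) ≠ θ := fun h => hρz (cAng_injective u₀ (h.trans hθdef))
    refine ⟨cAng_lt_pi hρu, hρθ, ?_, ?_⟩
    · intro hlt
      rcases lt_or_gt_of_ne hρθ with h | h
      · exact absurd hbtw.2 (not_lt.mpr (max_lt hlt h).le)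
      · exact h
    · intro hgt
      rcases lt_or_gt_of_ne hρθ with h | h
      · exact h
      · exact absurd hbtw.1 (not_lt.mpr (le_of_lt (lt_min hgt h)))
  have hFmapA : ∀ s, -π < s → s < θ → θ < F s ∧ F s < π := by
    intro s h1' h2'
    have hx := hmem s h1' (by linarith) (ne_of_lt h2')
    have hb := hbasic _ hx
    have hg : cAng u₀ (cExp u₀ s) = s := hcgA s h1' (by linarith)
    rw [hFs_eq]
    exact ⟨hb.2.2.1 (by rw [hg]; exact h2'), hb.1⟩
  have hFmapB : ∀ s, θ < s → s < π → -π < F s ∧ F s < θ := by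
    intro s h1' h2'
    have hx := hmem s (by linarith) h2' (ne_of_gt h1')
    have hb := hbasic _ hx
    have hg : cAng u₀ (cExp u₀ s) = s := hcgA s (by linarith) h2'.le
    rw [hFs_eq]
    exact ⟨neg_pi_lt_cAng u₀ _, hb.2.2.2 (by rw [hg]; exact h1')⟩
  have hFF : ∀ s, -π < s → s < π → s ≠ θ → F (F s) = s := by
    intro s h1' h2' h3'
    have hcs : cExp u₀ (F s) = ρ (cExp u₀ s) := by rw [hFs_eq]; exact cExp_cAng u₀ _
    calc F (F s) = cAng u₀ (ρ (cExp u₀ (F s))) := hFs_eq _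
      _ = cAng u₀ (ρ (ρ (cExp u₀ s))) := by rw [hcs]
      _ = cAng u₀ (cExp u₀ s) := by rw [hinv]
      _ = s := hcgA s h1' h2'.le
  have hantiA : ∀ s s', -π < s → s < θ → -π < s' → s' < θ → s < s' → F s' < F s := by
    intro s s' h1' h2' h3' h4' h5'
    have hgx : cAng u₀ (cExp u₀ s) = s := hcgA s h1' (by linarith)
    have hgx' : cAng u₀ (cExp u₀ s') = s' := hcgA s' h3' (by linarith)
    have hxm := hmem s h1' (by linarith) (ne_of_lt h2')
    have hx'm := hmem s' h3' (by linarith) (ne_of_lt h4')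
    have hFs := hFmapA s h1' h2'
    have hFs' := hFmapA s' h3' h4'
    have hgρx : cAng u₀ (ρ (cExp u₀ s)) = F s := (hFs_eq s).symm
    have hgρx' : cAng u₀ (ρ (cExp u₀ s')) = F s' := (hFs_eq s').symm
    have hne : cExp u₀ s' ≠ cExp u₀ s := fun h => by
      have := congrArg (cAng u₀) h; rw [hgx, hgx'] at this; linarith
    have hne2 : cExp u₀ s' ≠ ρ (cExp u₀ s) := fun h => by
      have := congrArg (cAng u₀) h; rw [hgx', hgρx] at this; linarith [hFs.1]
    have hB := refl_noncross h2 h3 he hρ hinv hxm hx'm hne hne2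
    have hmin : min (cAng u₀ (cExp u₀ s)) (cAng u₀ (ρ (cExp u₀ s))) = s := by
      rw [hgx, hgρx]; exact min_eq_left (by linarith [hFs.1])
    have hmax : max (cAng u₀ (cExp u₀ s)) (cAng u₀ (ρ (cExp u₀ s))) = F s := by
      rw [hgx, hgρx]; exact max_eq_right (by linarith [hFs.1])
    have hBx' : Btw u₀ (cExp u₀ s) (ρ (cExp u₀ s)) (cExp u₀ s') := by
      rw [Btw, hmin, hmax, hgx']
      exact ⟨h5', by linarith [hFs.1]⟩
    have hBρ := hB.mp hBx'
    rw [Btw, hmin, hmax, hgρx'] at hBρ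
    exact hBρ.2
  have hantiB : ∀ s s', θ < s → s < π → θ < s' → s' < π → s < s' → F s' < F s := by
    intro s s' h1' h2' h3' h4' h5'
    have hgx : cAng u₀ (cExp u₀ s) = s := hcgA s (by linarith) h2'.le
    have hgx' : cAng u₀ (cExp u₀ s') = s' := hcgA s' (by linarith) h4'.le
    have hxm := hmem s (by linarith) h2' (ne_of_gt h1')
    have hx'm := hmem s' (by linarith) h4' (ne_of_gt h3')
    have hFs := hFmapB s h1' h2'
    have hFs' := hFmapB s' h3' h4'
    have hgρx : cAng u₀ (ρ (cExp u₀ s)) = F s := (hFs_eq s).symm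
    have hgρx' : cAng u₀ (ρ (cExp u₀ s')) = F s' := (hFs_eq s').symm
    have hne : cExp u₀ s' ≠ cExp u₀ s := fun h => by
      have := congrArg (cAng u₀) h; rw [hgx, hgx'] at this; linarith
    have hne2 : cExp u₀ s' ≠ ρ (cExp u₀ s) := fun h => by
      have := congrArg (cAng u₀) h; rw [hgx', hgρx] at this; linarith [hFs.2]
    have hB := refl_noncross h2 h3 he hρ hinv hxm hx'm hne hne2
    have hmin : min (cAng u₀ (cExp u₀ s)) (cAng u₀ (ρ (cExp u₀ s))) = F s := by
      rw [hgx, hgρx]; exact min_eq_right (by linarith [hFs.2])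
    have hmax : max (cAng u₀ (cExp u₀ s)) (cAng u₀ (ρ (cExp u₀ s))) = s := by
      rw [hgx, hgρx]; exact max_eq_left (by linarith [hFs.2])
    have hnBx' : ¬ Btw u₀ (cExp u₀ s) (ρ (cExp u₀ s)) (cExp u₀ s') := by
      rw [Btw, hmin, hmax, hgx']
      intro hc
      linarith [hc.2]
    have hnBρ : ¬ Btw u₀ (cExp u₀ s) (ρ (cExp u₀ s)) (ρ (cExp u₀ s')) := fun hc => hnBx' (hB.mpr hc)
    rw [Btw, hmin, hmax, hgρx'] at hnBρ
    have hnP : ¬ (F s < F s') := fun hP => hnBρ ⟨hP, by linarith [hFs'.2]⟩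
    rcases lt_or_eq_of_le (not_lt.mp hnP) with h | h
    · exact h
    · exfalso
      have e1 := hFF s (by linarith) h2' (ne_of_gt h1')
      have e2 := hFF s' (by linarith) h4' (ne_of_gt h3')
      rw [h] at e2
      rw [e1] at e2
      linarith
  have hsurjA : ∀ y, θ < y → y < π → ∃ s, (-π < s ∧ s < θ) ∧ F s = y := by
    intro y hy1 hy2
    exact ⟨F y, hFmapB y hy1 hy2, hFF y (by linarith) hy2 (ne_of_gt hy1)⟩
  have hsurjB : ∀ y, -π < y → y < θ → ∃ s, (θ < s ∧ s < π) ∧ F s = y := by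
    intro y hy1 hy2
    exact ⟨F y, hFmapA y hy1 hy2, hFF y hy1 (by linarith) (ne_of_lt hy2)⟩
  have key : ∀ x₀ : Circle, ∀ W' : Set Circle, IsOpen W' → ρ x₀ ∈ W' →
      ∃ V : Set Circle, IsOpen V ∧ x₀ ∈ V ∧ ∀ w ∈ V, ρ w ∈ W' := by
    intro x₀ W' hW' hx₀W'
    by_cases hxu : x₀ = u₀
    · rw [hxu, hρu₀] at hx₀W'
      obtain ⟨δ, hδ, hδsub⟩ := nbase_sub u₀ hW' hx₀W'
      obtain ⟨η₁, hη₁, hB1⟩ := anti_bot (l := -π) (m := θ) (α := θ) (β := π) (F := F) hθπ hantiA hsurjA hδ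
      obtain ⟨η₂, hη₂, hB2⟩ := anti_top (l := θ) (m := π) (α := -π) (β := θ) (F := F) hθπ' hantiB hsurjB hδ
      set η := min (min η₁ η₂) (min (π - θ) (θ + π)) with hη
      have hηpos : 0 < η := lt_min (lt_min hη₁ hη₂) (lt_min (by linarith) (by linarith))
      refine ⟨{w : Circle | π - η < cAng u₀ w ∨ cAng u₀ w < -π + η}, isOpen_nbase u₀ hηpos, ?_, ?_⟩
      · simp only [Set.mem_setOf_eq, hxu, cAng_self]
        left; linarith
      · intro w hw
        simp only [Set.mem_setOf_eq] at hw
        by_cases hwu : w = u₀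
        · rw [hwu, hρu₀]
          exact hδsub (by left; rw [cAng_self]; linarith)
        · have hwπ : cAng u₀ w < π := cAng_lt_pi hwu
          have hη4 : η ≤ π - θ := le_trans (min_le_right _ _) (min_le_left _ _)
          have hη5 : η ≤ θ + π := le_trans (min_le_right _ _) (min_le_right _ _)
          have hη1' : η ≤ η₁ := le_trans (min_le_left _ _) (min_le_left _ _)
          have hη2' : η ≤ η₂ := le_trans (min_le_left _ _) (min_le_right _ _)
          rcases hw with h | h
          · have hs1 : θ < cAng u₀ w := by linarith
            have hcon := hB2 (cAng u₀ w) hs1 hwπ (by linarith)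
            apply hδsub
            right
            rw [hgρ w]
            linarith
          · have hs1 : cAng u₀ w < θ := by linarith [neg_pi_lt_cAng u₀ w]
            have hcon := hB1 (cAng u₀ w) (neg_pi_lt_cAng u₀ w) hs1 (by linarith)
            apply hδsub
            left
            rw [hgρ w]
            linarith
    · by_cases hxz : x₀ = z₀
      · rw [hxz, hρz₀] at hx₀W'
        obtain ⟨ε, hε, hεπ, hεsub⟩ := band_sub u₀ hW' hx₀W' hzu
        obtain ⟨η₁, hη₁, hB1⟩ := anti_top (l := -π) (m := θ) (α := θ) (β := π) (F := F) hθπ hantiA hsurjA hε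
        obtain ⟨η₂, hη₂, hB2⟩ := anti_bot (l := θ) (m := π) (α := -π) (β := θ) (F := F) hθπ' hantiB hsurjB hε
        set η := min (min η₁ η₂) (min (π - θ) (θ + π)) with hη
        have hηpos : 0 < η := lt_min (lt_min hη₁ hη₂) (lt_min (by linarith) (by linarith))
        have hη4 : η ≤ π - θ := le_trans (min_le_right _ _) (min_le_left _ _)
        have hη5 : η ≤ θ + π := le_trans (min_le_right _ _) (min_le_right _ _)
        have hη1' : η ≤ η₁ := le_trans (min_le_left _ _) (min_le_left _ _)
        have hη2' : η ≤ η₂ := le_trans (min_le_left _ _) (min_le_right _ _)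
        refine ⟨{w : Circle | θ - η < cAng u₀ w ∧ cAng u₀ w < θ + η},
          isOpen_band u₀ _ (by linarith), ?_, ?_⟩
        · simp only [Set.mem_setOf_eq, hxz, ← hθdef]
          exact ⟨by linarith, by linarith⟩
        · intro w hw
          simp only [Set.mem_setOf_eq] at hw
          rcases lt_trichotomy (cAng u₀ w) θ with h | h | h
          · have hcon := hB1 (cAng u₀ w) (by linarith) h (by linarith)
            have hm2 := hFmapA (cAng u₀ w) (by linarith) h
            apply hεsub
            simp only [Set.mem_setOf_eq, ← hθdef]
            rw [hgρ w]
            exact ⟨by linarith [hm2.1], by linarith⟩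
          · have hwz : w = z₀ := cAng_injective u₀ (h.trans hθdef)
            rw [hwz, hρz₀]
            apply hεsub
            simp only [Set.mem_setOf_eq, ← hθdef]
            exact ⟨by linarith, by linarith⟩
          · have hcon := hB2 (cAng u₀ w) h (by linarith) (by linarith)
            have hm2 := hFmapB (cAng u₀ w) h (by linarith)
            apply hεsub
            simp only [Set.mem_setOf_eq, ← hθdef]
            rw [hgρ w]
            exact ⟨by linarith, by linarith [hm2.2]⟩
      · have hs₀l : -π < cAng u₀ x₀ := neg_pi_lt_cAng u₀ x₀
        have hs₀u : cAng u₀ x₀ < π := cAng_lt_pi hxu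
        have hs₀θ : cAng u₀ x₀ ≠ θ := fun h => hxz (by
          rw [← cExp_cAng u₀ x₀, h, hθdef, cExp_cAng])
        have hx₀m : x₀ ∉ EventPts e := by
          rw [hPts]
          simp only [Set.mem_insert_iff, Set.mem_singleton_iff]
          push_neg
          exact ⟨hxz, hxu⟩
        have hρx₀u : ρ x₀ ≠ u₀ := (refl_btw h2 he hρ hx₀m).2.1
        obtain ⟨ε, hε, hεπ, hεsub⟩ := band_sub u₀ hW' hx₀W' hρx₀u
        rcases lt_or_gt_of_ne hs₀θ with hlt | hgt
        · obtain ⟨η₀, hη₀, hI⟩ := anti_interior (l := -π) (m := θ) (α := θ) (β := π) (F := F)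
            hantiA hsurjA hs₀l hlt (hFmapA _ hs₀l hlt) hε
          set η := min η₀ (min (θ - cAng u₀ x₀) (cAng u₀ x₀ + π)) with hη
          have hηpos : 0 < η := lt_min hη₀ (lt_min (by linarith) (by linarith))
          have hηa : η ≤ η₀ := min_le_left _ _
          have hηb : η ≤ θ - cAng u₀ x₀ := le_trans (min_le_right _ _) (min_le_left _ _)
          have hηc : η ≤ cAng u₀ x₀ + π := le_trans (min_le_right _ _) (min_le_right _ _)
          refine ⟨{w : Circle | cAng u₀ x₀ - η < cAng u₀ w ∧ cAng u₀ w < cAng u₀ x₀ + η},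
            isOpen_band u₀ _ (by linarith), ?_, ?_⟩
          · exact ⟨by linarith, by linarith⟩
          · intro w hw
            simp only [Set.mem_setOf_eq] at hw
            have hw1 : -π < cAng u₀ w := by linarith
            have hw2 : cAng u₀ w < θ := by linarith
            have hcon := hI (cAng u₀ w) hw1 hw2 (by rw [abs_lt]; constructor <;> linarith)
            apply hεsub
            simp only [Set.mem_setOf_eq]
            rw [hgρ w, hgρ x₀]
            have habs := abs_lt.mp hcon
            exact ⟨by linarith [habs.1], by linarith [habs.2]⟩
        · obtain ⟨η₀, hη₀, hI⟩ := anti_interior (l := θ) (m := π) (α := -π) (β := θ) (F := F)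
            hantiB hsurjB hgt hs₀u (hFmapB _ hgt hs₀u) hε
          set η := min η₀ (min (cAng u₀ x₀ - θ) (π - cAng u₀ x₀)) with hη
          have hηpos : 0 < η := lt_min hη₀ (lt_min (by linarith) (by linarith))
          have hηa : η ≤ η₀ := min_le_left _ _
          have hηb : η ≤ cAng u₀ x₀ - θ := le_trans (min_le_right _ _) (min_le_left _ _)
          have hηc : η ≤ π - cAng u₀ x₀ := le_trans (min_le_right _ _) (min_le_right _ _)
          refine ⟨{w : Circle | cAng u₀ x₀ - η < cAng u₀ w ∧ cAng u₀ w < cAng u₀ x₀ + η},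
            isOpen_band u₀ _ (by linarith), ?_, ?_⟩
          · exact ⟨by linarith, by linarith⟩
          · intro w hw
            simp only [Set.mem_setOf_eq] at hw
            have hw1 : θ < cAng u₀ w := by linarith
            have hw2 : cAng u₀ w < π := by linarith
            have hcon := hI (cAng u₀ w) hw1 hw2 (by rw [abs_lt]; constructor <;> linarith)
            apply hεsub
            simp only [Set.mem_setOf_eq]
            rw [hgρ w, hgρ x₀]
            have habs := abs_lt.mp hcon
            exact ⟨by linarith [habs.1], by linarith [habs.2]⟩
  rw [continuous_iff_continuousAt]
  intro x₀
  rw [ContinuousAt, Filter.tendsto_def]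
  intro W hW
  obtain ⟨W', hsubW, hopW, hmemW⟩ := mem_nhds_iff.mp hW
  obtain ⟨V, hVo, hxV, hVmap⟩ := key x₀ W' hopW hmemW
  exact Filter.mem_of_superset (hVo.mem_nhds hxV) (fun w hw => hsubW (hVmap w hw))


end Main

end Paper

namespace Paper

/-- in a space satisfying Axioms (h1)–(h5), for every event `e` the
reflection `ρ_e` with respect to `e` exists and is an involutive homeomorphism of
the circle. -/
theorem stmt6 (line : Event → Set Event)
    (h1 : AxH1 (Set.range line) line) (h2 : AxH2 line) (h3 : AxH3 line)
    (h4 : AxH4 line) (h5 : AxH5 line) (e : Event) :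
    (∃ ρ : Circle → Circle, RefSpec line e ρ) ∧
    ∀ ρ : Circle → Circle, RefSpec line e ρ →
      Function.Involutive ρ ∧ IsHomeomorph ρ := by
  classical
  obtain ⟨z₀, u₀, he⟩ : ∃ z u : Circle, e.1 = s(z, u) :=
    Sym2.inductionOn e.1 (fun x y => ⟨x, y, rfl⟩)
  have hzu : z₀ ≠ u₀ := by
    intro h
    exact e.2 (by rw [he, h]; exact Sym2.mk_isDiag_iff.mpr rfl)
  constructor
  · -- existence
    have hch : ∀ x : Circle, x ∉ EventPts e → ∃ a : Event, a ∈ line e ∧ x ∈ a.1 :=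
      fun x hx => (h4 e x hx).exists
    choose f hf using hch
    refine ⟨fun x => if hx : x ∈ EventPts e then x else Sym2.Mem.other (hf x hx).2, ?_, ?_⟩
    · intro p hp
      simp [hp]
    · intro x hx
      simp only [dif_neg hx]
      refine ⟨Sym2.other_ne (f x hx).2 (hf x hx).2, f x hx, (hf x hx).1, (hf x hx).2, ?_⟩
      exact Sym2.other_mem (hf x hx).2
  · intro ρ hρ
    refine ⟨refspec_involutive h2 h4 he hρ, ?_⟩
    rw [isHomeomorph_iff_continuous_bijective]
    exact ⟨refspec_continuous h2 h3 h4 he hzu hρ,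
      (refspec_involutive h2 h4 he hρ).bijective⟩

end Paper
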